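/- With Δ(y, θ_0) = y − (I − θ_0 L)^{−1} R_1(y, θ_0), the random vectors Δ(y, θ_0) and R_1(y, θ_0) are independent; consequently, the selection event {A y ≤ b} can be written as {A (I − θ_0 L)^{−1} R_1 + A Δ ≤ b}, where conditional on Δ = δ the constraint is a polyhedral constraint on R_1 alone. -/

import Mathlib

open Matrix MeasureTheory ProbabilityTheory
open scoped ENNReal NNReal

section Aux

lemma measurable_mulVec {n m : ℕ} (M : Matrix (Fin m) (Fin n) ℝ) :
    Measurable fun x : Fin n → ℝ => M *ᵥ x := by
  refine measurable_pi_lambda _ fun i => ?_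
  simpa [Matrix.mulVec, dotProduct] using
    Finset.measurable_sum Finset.univ fun j _ => (measurable_pi_apply j : Measurable fun x : Fin n → ℝ => x j).const_mul (M i j)

lemma indepFun_comp_measurePreserving {Ω Ω' α β : Type*} [MeasurableSpace Ω]
    [MeasurableSpace Ω'] [MeasurableSpace α] [MeasurableSpace β]
    {P : Measure Ω} {μ : Measure Ω'} {e : Ω → Ω'} (he : MeasurePreserving e P μ)
    {f : Ω' → α} {g : Ω' → β} (hf : Measurable f) (hg : Measurable g)
    (h : IndepFun f g μ) : IndepFun (f ∘ e) (g ∘ e) P := by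
  rw [indepFun_iff_measure_inter_preimage_eq_mul] at h ⊢
  intro s t hs ht
  have h1 : (f ∘ e) ⁻¹' s = e ⁻¹' (f ⁻¹' s) := rfl
  have h2 : (g ∘ e) ⁻¹' t = e ⁻¹' (g ⁻¹' t) := rfl
  rw [h1, h2, ← Set.preimage_inter, he.measure_preimage ((hf hs).inter (hg ht)).nullMeasurableSet,
    he.measure_preimage (hf hs).nullMeasurableSet, he.measure_preimage (hg ht).nullMeasurableSet]
  exact h s t hs ht

lemma lintegral_pi_prod : ∀ {n : ℕ} (μ : Fin n → Measure ℝ) [∀ i, SigmaFinite (μ i)]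
    (f : Fin n → ℝ → ℝ≥0∞), (∀ i, Measurable (f i)) →
    ∫⁻ x, ∏ i, f i (x i) ∂(Measure.pi μ) = ∏ i, ∫⁻ t, f i t ∂(μ i) := by
  intro n
  induction n with
  | zero =>
    intro μ _ f _
    simp [Measure.pi_of_empty]
  | succ n ih =>
    intro μ _ f hf
    have hmp := (measurePreserving_piFinSuccAbove μ 0).symm
    rw [← hmp.lintegral_comp (f := fun x => ∏ i, f i (x i))
      (Finset.measurable_prod _ fun i _ => (hf i).comp (measurable_pi_apply i))]
    have : ∀ z : ℝ × (Fin n → ℝ),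
        (∏ i, f i (((MeasurableEquiv.piFinSuccAbove (fun _ => ℝ) 0).symm z) i)) =
          f 0 z.1 * ∏ i : Fin n, f i.succ (z.2 i) := by
      intro z
      rw [Fin.prod_univ_succ]
      simp [MeasurableEquiv.piFinSuccAbove_symm_apply, Fin.insertNthEquiv,
        Fin.insertNth_zero, Fin.cons_succ, Fin.cons_zero]
    simp_rw [this]
    rw [lintegral_prod_mul (f := f 0) (g := fun (w : Fin n → ℝ) => ∏ i : Fin n, f i.succ (w i))
      (hf 0).aemeasurable
      (Finset.measurable_prod _ fun i _ => (hf i.succ).comp (measurable_pi_apply i)).aemeasurable]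
    rw [ih _ _ fun i => hf i.succ, Fin.prod_univ_succ]
    norm_num [Fin.zero_succAbove]

lemma pi_gaussian_eq_withDensity {n : ℕ} {v : ℝ≥0} (hv : v ≠ 0) :
    (Measure.pi fun _ : Fin n => gaussianReal 0 v) =
      ((volume : Measure (Fin n → ℝ)).withDensity fun x => ∏ i, gaussianPDF 0 v (x i)) := by
  refine Measure.pi_eq fun s hs => ?_
  rw [withDensity_apply _ (MeasurableSet.univ_pi hs)]
  have key : ∀ x : Fin n → ℝ, (Set.univ.pi s).indicator (fun x => ∏ i, gaussianPDF 0 v (x i)) x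
      = ∏ i, (s i).indicator (gaussianPDF 0 v) (x i) := by
    intro x
    by_cases hx : x ∈ Set.univ.pi s
    · rw [Set.indicator_of_mem hx]
      exact Finset.prod_congr rfl fun i _ =>
        (Set.indicator_of_mem (hx i (Set.mem_univ i)) _).symm
    · rw [Set.indicator_of_notMem hx]
      simp only [Set.mem_pi, Set.mem_univ, forall_true_left] at hx
      push_neg at hx
      obtain ⟨i, hi⟩ := hx
      exact (Finset.prod_eq_zero (Finset.mem_univ i) (Set.indicator_of_notMem hi _)).symm
  rw [← lintegral_indicator (MeasurableSet.univ_pi hs) (fun x => ∏ i, gaussianPDF 0 v (x i))]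
  simp_rw [key]
  rw [volume_pi, lintegral_pi_prod _ _ (fun i => (measurable_gaussianPDF 0 v).indicator (hs i))]
  refine Finset.prod_congr rfl fun i _ => ?_
  rw [lintegral_indicator (hs i), gaussianReal_apply _ hv]

lemma pi_dirac_zero {n : ℕ} :
    (Measure.pi fun _ : Fin n => Measure.dirac (0 : ℝ)) = Measure.dirac (0 : Fin n → ℝ) := by
  refine Measure.pi_eq fun s hs => ?_
  rw [Measure.dirac_apply' _ (MeasurableSet.univ_pi hs)]
  by_cases h0 : (0 : Fin n → ℝ) ∈ Set.univ.pi s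
  · rw [Set.indicator_of_mem h0]
    refine (Finset.prod_eq_one fun i _ => ?_).symm
    rw [Measure.dirac_apply' _ (hs i),
      Set.indicator_of_mem (show (0:ℝ) ∈ s i from h0 i (Set.mem_univ i))]
    rfl
  · rw [Set.indicator_of_notMem h0]
    simp only [Set.mem_pi, Set.mem_univ, forall_true_left] at h0
    push_neg at h0
    obtain ⟨i, hi⟩ := h0
    refine (Finset.prod_eq_zero (Finset.mem_univ i) ?_).symm
    rw [Measure.dirac_apply' _ (hs i), Set.indicator_of_notMem (show (0:ℝ) ∉ s i from hi)]

lemma sum_sq_mulVec {n : ℕ} {U : Matrix (Fin n) (Fin n) ℝ} (hU : Uᵀ * U = 1)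
    (x : Fin n → ℝ) : ∑ i, (U *ᵥ x) i ^ 2 = ∑ i, x i ^ 2 := by
  have h1 : ∀ y : Fin n → ℝ, ∑ i, y i ^ 2 = y ⬝ᵥ y := by
    intro y; simp [dotProduct, sq]
  rw [h1, h1, Matrix.dotProduct_mulVec, ← Matrix.mulVec_transpose, Matrix.mulVec_mulVec, hU,
    Matrix.one_mulVec]

lemma gaussian_density_invariant {n : ℕ} {v : ℝ≥0} {U : Matrix (Fin n) (Fin n) ℝ}
    (hU : Uᵀ * U = 1) (x : Fin n → ℝ) :
    ∏ i, gaussianPDF 0 v ((U *ᵥ x) i) = ∏ i, gaussianPDF 0 v (x i) := by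
  have h : ∀ y : Fin n → ℝ, ∏ i, gaussianPDF 0 v (y i) =
      ENNReal.ofReal ((Real.sqrt (2 * Real.pi * v))⁻¹ ^ n * Real.exp (∑ i, -(y i ^ 2) / (2 * v))) := by
    intro y
    simp only [gaussianPDF]
    rw [← ENNReal.ofReal_prod_of_nonneg fun i _ => gaussianPDFReal_nonneg 0 v (y i)]
    congr 1
    rw [Real.exp_sum,
      show ((Real.sqrt (2 * Real.pi * v))⁻¹ ^ n : ℝ) = ∏ _i : Fin n, (Real.sqrt (2 * Real.pi * v))⁻¹
        by simp [Finset.prod_const],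
      ← Finset.prod_mul_distrib]
    refine Finset.prod_congr rfl fun i _ => ?_
    rw [ProbabilityTheory.gaussianPDFReal]
    ring_nf
  have key := sum_sq_mulVec hU x
  have hsum : ∑ i, -(U *ᵥ x) i ^ 2 / (2 * (v : ℝ)) = ∑ i, -x i ^ 2 / (2 * (v : ℝ)) := by
    rw [← Finset.sum_div, ← Finset.sum_div, Finset.sum_neg_distrib, Finset.sum_neg_distrib, key]
  rw [h, h, hsum]

lemma map_mulVec_pi_gaussian {n : ℕ} (v : ℝ≥0) {U : Matrix (Fin n) (Fin n) ℝ}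
    (hU : Uᵀ * U = 1) :
    Measure.map (fun x => U *ᵥ x) (Measure.pi fun _ : Fin n => gaussianReal 0 v) =
      Measure.pi fun _ : Fin n => gaussianReal 0 v := by
  by_cases hv : v = 0
  · subst hv
    simp only [gaussianReal_zero_var, pi_dirac_zero,
      Measure.map_dirac' (measurable_mulVec U), Matrix.mulVec_zero]
  · have hdet2 : U.det * U.det = 1 := by
      have := congrArg Matrix.det hU
      rwa [Matrix.det_mul, Matrix.det_transpose, Matrix.det_one] at this
    have hdet : U.det = 1 ∨ U.det = -1 := mul_self_eq_one_iff.mp hdet2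
    have habs : |U.det⁻¹| = 1 := by rcases hdet with h | h <;> norm_num [h]
    have hmapvol : Measure.map (fun x => U *ᵥ x) (volume : Measure (Fin n → ℝ)) = volume := by
      have hd0 : U.det ≠ 0 := by rcases hdet with h | h <;> simp [h]
      have := Real.map_matrix_volume_pi_eq_smul_volume_pi hd0
      have he : (fun x : Fin n → ℝ => U *ᵥ x) = ⇑(Matrix.toLin' U) := by
        funext x; rw [Matrix.toLin'_apply]
      rw [he, this, habs, ENNReal.ofReal_one, one_smul]
    rw [pi_gaussian_eq_withDensity hv]
    ext s hs
    set ρ : (Fin n → ℝ) → ℝ≥0∞ := fun x => ∏ i, gaussianPDF 0 v (x i) with hρ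
    have hρm : Measurable ρ :=
      Finset.measurable_prod _ fun i _ =>
        (measurable_gaussianPDF 0 v).comp (measurable_pi_apply i)
    rw [Measure.map_apply (measurable_mulVec U) hs,
      withDensity_apply _ ((measurable_mulVec U) hs), withDensity_apply _ hs,
      ← lintegral_indicator ((measurable_mulVec U) hs), ← lintegral_indicator hs]
    have key : ∀ x : Fin n → ℝ,
        ((fun x => U *ᵥ x) ⁻¹' s).indicator ρ x = s.indicator ρ (U *ᵥ x) := by
      intro x
      by_cases hx : U *ᵥ x ∈ s
      · rw [Set.indicator_of_mem hx, Set.indicator_of_mem (by exact hx)]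
        exact (gaussian_density_invariant hU x).symm
      · rw [Set.indicator_of_notMem hx, Set.indicator_of_notMem (by exact hx)]
    simp_rw [key]
    rw [← lintegral_map (hρm.indicator hs) (measurable_mulVec U), hmapvol]

lemma indepFun_fst_snd' {α β : Type*} [MeasurableSpace α] [MeasurableSpace β]
    (μ : Measure α) (ν : Measure β) [IsProbabilityMeasure μ] [IsProbabilityMeasure ν] :
    IndepFun (Prod.fst : α × β → α) (Prod.snd : α × β → β) (μ.prod ν) := by
  rw [indepFun_iff_map_prod_eq_prod_map_map measurable_fst.aemeasurable
    measurable_snd.aemeasurable]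
  have : (fun ω : α × β => (ω.1, ω.2)) = id := by funext ω; rfl
  simp [this, Measure.map_id]

lemma indepFun_proj_pi {n : ℕ} (μ : Fin n → Measure ℝ) [∀ i, IsProbabilityMeasure (μ i)]
    (p : Fin n → Prop) [DecidablePred p] :
    IndepFun (fun x : Fin n → ℝ => fun i => if p i then x i else 0)
      (fun x : Fin n → ℝ => fun i => if p i then 0 else x i) (Measure.pi μ) := by
  set e := MeasurableEquiv.piEquivPiSubtypeProd (fun _ : Fin n => ℝ) p with he
  have hmp := measurePreserving_piEquivPiSubtypeProd μ p
  set F1 : (∀ i : Subtype p, ℝ) → (Fin n → ℝ) :=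
    fun u i => if h : p i then u ⟨i, h⟩ else 0 with hF1
  set G1 : (∀ i : {i // ¬ p i}, ℝ) → (Fin n → ℝ) :=
    fun w i => if h : ¬ p i then w ⟨i, h⟩ else 0 with hG1
  have hF1m : Measurable F1 := by
    refine measurable_pi_lambda _ fun i => ?_
    by_cases h : p i
    · have : (fun u : (∀ _ : Subtype p, ℝ) => F1 u i) = fun u => u ⟨i, h⟩ := by
        funext u; simp [hF1, h]
      exact this ▸ measurable_pi_apply _
    · have : (fun u : (∀ _ : Subtype p, ℝ) => F1 u i) = fun _ => 0 := by
        funext u; simp [hF1, h]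
      exact this ▸ measurable_const
  have hG1m : Measurable G1 := by
    refine measurable_pi_lambda _ fun i => ?_
    by_cases h : p i
    · have : (fun w : (∀ _ : {i // ¬ p i}, ℝ) => G1 w i) = fun _ => 0 := by
        funext w; simp [hG1, h]
      exact this ▸ measurable_const
    · have : (fun w : (∀ _ : {i // ¬ p i}, ℝ) => G1 w i) = fun w => w ⟨i, h⟩ := by
        funext w; simp [hG1, h]
      exact this ▸ measurable_pi_apply _
  have hind := ((indepFun_fst_snd' (Measure.pi fun i : Subtype p => μ i)
    (Measure.pi fun i : {i // ¬ p i} => μ i)).comp hF1m hG1m)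
  have key := indepFun_comp_measurePreserving hmp (hF1m.comp measurable_fst)
    (hG1m.comp measurable_snd) hind
  have hF : (fun x : Fin n → ℝ => fun i => if p i then x i else 0)
      = (F1 ∘ Prod.fst) ∘ ⇑(MeasurableEquiv.piEquivPiSubtypeProd (fun _ : Fin n => ℝ) p) := by
    funext x i
    by_cases h : p i <;>
      simp [hF1, h, MeasurableEquiv.piEquivPiSubtypeProd, Equiv.piEquivPiSubtypeProd]
  have hG : (fun x : Fin n → ℝ => fun i => if p i then 0 else x i)
      = (G1 ∘ Prod.snd) ∘ ⇑(MeasurableEquiv.piEquivPiSubtypeProd (fun _ : Fin n => ℝ) p) := by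
    funext x i
    by_cases h : p i <;>
      simp [hG1, h, MeasurableEquiv.piEquivPiSubtypeProd, Equiv.piEquivPiSubtypeProd]
  rw [hF, hG]
  exact key

lemma indepFun_proj_gaussian {n : ℕ} (v : ℝ≥0) {Q : Matrix (Fin n) (Fin n) ℝ}
    (hQsymm : Qᵀ = Q) (hQidem : Q * Q = Q) :
    IndepFun (fun x : Fin n → ℝ => Q *ᵥ x) (fun x : Fin n → ℝ => (1 - Q) *ᵥ x)
      (Measure.pi fun _ : Fin n => gaussianReal 0 v) := by
  classical
  have hH : Q.IsHermitian := by
    rwa [Matrix.IsHermitian, Matrix.conjTranspose_eq_transpose_of_trivial]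
  set U : Matrix (Fin n) (Fin n) ℝ := (hH.eigenvectorUnitary : Matrix (Fin n) (Fin n) ℝ)
    with hUdef
  have hUU : Uᵀ * U = 1 := by
    have := Matrix.mem_unitaryGroup_iff'.mp hH.eigenvectorUnitary.2
    rwa [Matrix.star_eq_conjTranspose, Matrix.conjTranspose_eq_transpose_of_trivial] at this
  have hUU' : U * Uᵀ = 1 := by
    rw [mul_eq_one_comm] at hUU; exact hUU
  set lam : Fin n → ℝ := hH.eigenvalues with hlam
  have hspec : Q = U * Matrix.diagonal lam * Uᵀ := by
    have := hH.spectral_theorem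
    simpa [Matrix.star_eq_conjTranspose, Matrix.conjTranspose_eq_transpose_of_trivial,
      Function.comp] using this
  have cancel : ∀ X Y : Matrix (Fin n) (Fin n) ℝ, U * X * Uᵀ = U * Y * Uᵀ → X = Y := by
    intro X Y h
    have h2 := congrArg (fun M => Uᵀ * M * U) h
    simp only [Matrix.mul_assoc] at h2
    rw [show Uᵀ * (U * (X * (Uᵀ * U))) = (Uᵀ * U) * (X * (Uᵀ * U)) by rw [Matrix.mul_assoc],
      show Uᵀ * (U * (Y * (Uᵀ * U))) = (Uᵀ * U) * (Y * (Uᵀ * U)) by rw [Matrix.mul_assoc],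
      hUU] at h2
    simpa using h2
  have hDD : Matrix.diagonal lam * Matrix.diagonal lam = Matrix.diagonal lam := by
    refine cancel _ _ ?_
    have expand : U * (Matrix.diagonal lam * Matrix.diagonal lam) * Uᵀ
        = (U * Matrix.diagonal lam * Uᵀ) * (U * Matrix.diagonal lam * Uᵀ) := by
      rw [Matrix.mul_assoc (U * Matrix.diagonal lam) Uᵀ _]
      rw [show Uᵀ * (U * Matrix.diagonal lam * Uᵀ)
          = (Uᵀ * U) * (Matrix.diagonal lam * Uᵀ) by
        simp only [Matrix.mul_assoc]]
      rw [hUU, Matrix.one_mul]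
      simp only [Matrix.mul_assoc]
    rw [expand, ← hspec, hQidem, hspec]
  have heig : ∀ i, lam i = 0 ∨ lam i = 1 := by
    intro i
    have h := congr_fun (congr_fun hDD i) i
    rw [Matrix.diagonal_mul_diagonal] at h
    simp only [Matrix.diagonal_apply_eq] at h
    have h0 : lam i * (lam i - 1) = 0 := by rw [mul_sub, h]; ring
    rcases mul_eq_zero.mp h0 with h1 | h1
    · exact Or.inl h1
    · exact Or.inr (by linarith)
  set p : Fin n → Prop := fun i => lam i = 1 with hp
  have hFv : ∀ z : Fin n → ℝ, Matrix.diagonal lam *ᵥ z = fun i => if p i then z i else 0 := by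
    intro z; funext i
    rw [Matrix.mulVec_diagonal]
    rcases heig i with h | h <;> simp [hp, h]
  have hGv : ∀ z : Fin n → ℝ,
      (1 - Matrix.diagonal lam) *ᵥ z = fun i => if p i then 0 else z i := by
    intro z; funext i
    rw [Matrix.sub_mulVec, Matrix.one_mulVec]
    have : (Matrix.diagonal lam *ᵥ z) i = lam i * z i := Matrix.mulVec_diagonal _ _ _
    rcases heig i with h | h <;> simp [hp, h, this]
  have mF : Measurable fun z : Fin n → ℝ => fun i => if p i then z i else 0 := by
    refine measurable_pi_lambda _ fun i => ?_
    by_cases h : p i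
    · have : (fun c : Fin n → ℝ => if p i then c i else 0) = fun c => c i := by
        funext c; rw [if_pos h]
      exact this ▸ measurable_pi_apply i
    · have : (fun c : Fin n → ℝ => if p i then c i else 0) = fun _ => 0 := by
        funext c; rw [if_neg h]
      exact this ▸ measurable_const
  have mG : Measurable fun z : Fin n → ℝ => fun i => if p i then 0 else (z i : ℝ) := by
    refine measurable_pi_lambda _ fun i => ?_
    by_cases h : p i
    · have : (fun c : Fin n → ℝ => if p i then 0 else c i) = fun _ => 0 := by
        funext c; rw [if_pos h]
      exact this ▸ measurable_const
    · have : (fun c : Fin n → ℝ => if p i then 0 else c i) = fun c => c i := by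
        funext c; rw [if_neg h]
      exact this ▸ measurable_pi_apply i
  have base := indepFun_proj_pi (fun _ : Fin n => gaussianReal 0 v) p
  have comp1 := base.comp (measurable_mulVec U) (measurable_mulVec U)
  have hUT : (Uᵀ)ᵀ * Uᵀ = 1 := by rw [Matrix.transpose_transpose]; exact hUU'
  have mp : MeasurePreserving (fun x : Fin n → ℝ => Uᵀ *ᵥ x)
      (Measure.pi fun _ : Fin n => gaussianReal 0 v)
      (Measure.pi fun _ : Fin n => gaussianReal 0 v) :=
    ⟨measurable_mulVec Uᵀ, map_mulVec_pi_gaussian v hUT⟩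
  have final := indepFun_comp_measurePreserving mp
    ((measurable_mulVec U).comp mF) ((measurable_mulVec U).comp mG) comp1
  have hQx : (fun x : Fin n → ℝ => Q *ᵥ x)
      = ((fun x => U *ᵥ x) ∘ fun z : Fin n → ℝ => fun i => if p i then z i else 0) ∘
        fun x : Fin n → ℝ => Uᵀ *ᵥ x := by
    funext x
    simp only [Function.comp_apply, ← hFv]
    rw [Matrix.mulVec_mulVec, Matrix.mulVec_mulVec, ← hspec]
  have h1Q : 1 - Q = U * (1 - Matrix.diagonal lam) * Uᵀ := by
    rw [Matrix.mul_sub, Matrix.mul_one, Matrix.sub_mul, hUU', ← hspec]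
  have hQx' : (fun x : Fin n → ℝ => (1 - Q) *ᵥ x)
      = ((fun x => U *ᵥ x) ∘ fun z : Fin n → ℝ => fun i => if p i then 0 else z i) ∘
        fun x : Fin n → ℝ => Uᵀ *ᵥ x := by
    funext x
    simp only [Function.comp_apply, ← hGv]
    rw [Matrix.mulVec_mulVec, Matrix.mulVec_mulVec, ← h1Q]
  rw [hQx, hQx']
  exact final

end Aux

/-- In the selective t-test setting `y = θ₀(Ly + ζ) + Zγ + ε`,
`ε ~ N(0, σ²I)`, with `R₁ = (I - P_Z)(y - θ₀(Ly + ζ))` and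
`Δ = y - (I - θ₀L)⁻¹ R₁`, the random vectors `Δ` and `R₁` are independent,
and the selection event `{A y ≤ b}` is exactly
`{A (I - θ₀L)⁻¹ R₁ + A Δ ≤ b}`: conditional on `Δ = δ` it is a polyhedral
constraint on `R₁` alone. -/
theorem delta_indep_residual_and_selection_rewrite
    {n pz m : ℕ} (L PZ : Matrix (Fin n) (Fin n) ℝ) (ζ : Fin n → ℝ)
    (Z : Matrix (Fin n) (Fin pz) ℝ) (γ : Fin pz → ℝ) (θ₀ : ℝ)
    (hPsymm : PZᵀ = PZ) (hPidem : PZ * PZ = PZ) (hPZ : PZ * Z = Z)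
    (hM : IsUnit (1 - θ₀ • L))
    {Ω : Type*} [MeasurableSpace Ω] (P : Measure Ω) [IsProbabilityMeasure P]
    (σ : ℝ≥0) (ε y : Ω → Fin n → ℝ) (hε : Measurable ε) (hy : Measurable y)
    (hεlaw : Measure.map ε P = Measure.pi fun _ : Fin n => gaussianReal 0 (σ ^ 2))
    (hmodel : ∀ ω, y ω = θ₀ • (L *ᵥ y ω + ζ) + Z *ᵥ γ + ε ω)
    (R1 Δ : Ω → Fin n → ℝ)
    (hR1 : ∀ ω, R1 ω = (1 - PZ) *ᵥ (y ω - θ₀ • (L *ᵥ y ω + ζ)))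
    (hΔ : ∀ ω, Δ ω = y ω - (1 - θ₀ • L)⁻¹ *ᵥ R1 ω)
    (A : Matrix (Fin m) (Fin n) ℝ) (b : Fin m → ℝ) :
    IndepFun Δ R1 P ∧
      ∀ ω, A *ᵥ y ω ≤ b ↔
        A *ᵥ ((1 - θ₀ • L)⁻¹ *ᵥ R1 ω) + A *ᵥ Δ ω ≤ b := by
  set M : Matrix (Fin n) (Fin n) ℝ := 1 - θ₀ • L with hMdef
  have hdet : IsUnit M.det := (Matrix.isUnit_iff_isUnit_det M).mp hM
  have hinv1 : M⁻¹ * M = 1 := Matrix.nonsing_inv_mul M hdet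
  have hinv2 : M * M⁻¹ = 1 := Matrix.mul_nonsing_inv M hdet
  have hMv : ∀ ω, M *ᵥ y ω = θ₀ • ζ + Z *ᵥ γ + ε ω := by
    intro ω
    rw [hMdef, Matrix.sub_mulVec, Matrix.one_mulVec, Matrix.smul_mulVec]
    nth_rewrite 1 [hmodel ω]
    rw [smul_add]
    abel
  have hR1' : ∀ ω, R1 ω = (1 - PZ) *ᵥ ε ω := by
    intro ω
    rw [hR1 ω]
    have h1 : y ω - θ₀ • (L *ᵥ y ω + ζ) = Z *ᵥ γ + ε ω := by
      nth_rewrite 1 [hmodel ω]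
      abel
    rw [h1, Matrix.mulVec_add, Matrix.mulVec_mulVec,
      show (1 - PZ) * Z = 0 by rw [Matrix.sub_mul, Matrix.one_mul, hPZ, sub_self],
      Matrix.zero_mulVec, zero_add]
  have hΔ' : ∀ ω, Δ ω = M⁻¹ *ᵥ (θ₀ • ζ + Z *ᵥ γ + PZ *ᵥ ε ω) := by
    intro ω
    have hy : y ω = M⁻¹ *ᵥ (θ₀ • ζ + Z *ᵥ γ + ε ω) := by
      rw [← hMv ω, Matrix.mulVec_mulVec, hinv1, Matrix.one_mulVec]
    rw [hΔ ω, hy, hR1' ω, Matrix.sub_mulVec, Matrix.one_mulVec, ← Matrix.mulVec_sub]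
    congr 1
    abel
  refine ⟨?_, ?_⟩
  · have mpε : MeasurePreserving ε P (Measure.pi fun _ : Fin n => gaussianReal 0 (σ ^ 2)) :=
      ⟨hε, hεlaw⟩
    have hQind := indepFun_proj_gaussian (σ ^ 2) hPsymm hPidem
    have h2 := indepFun_comp_measurePreserving mpε (measurable_mulVec PZ)
      (measurable_mulVec (1 - PZ)) hQind
    have mf : Measurable fun w : Fin n → ℝ => M⁻¹ *ᵥ (θ₀ • ζ + Z *ᵥ γ + w) :=
      (measurable_mulVec M⁻¹).comp (measurable_const.add measurable_id)
    have h3 := h2.comp mf (measurable_id : Measurable (id : (Fin n → ℝ) → Fin n → ℝ))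
    have hΔeq : Δ = (fun w : Fin n → ℝ => M⁻¹ *ᵥ (θ₀ • ζ + Z *ᵥ γ + w)) ∘
        ((fun x : Fin n → ℝ => PZ *ᵥ x) ∘ ε) := by
      funext ω; exact hΔ' ω
    have hR1eq : R1 = id ∘ ((fun x : Fin n → ℝ => (1 - PZ) *ᵥ x) ∘ ε) := by
      funext ω; exact hR1' ω
    rw [hΔeq, hR1eq]
    exact h3
  · intro ω
    have hsum : A *ᵥ (M⁻¹ *ᵥ R1 ω) + A *ᵥ Δ ω = A *ᵥ y ω := by
      rw [hΔ ω, Matrix.mulVec_sub]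
      abel
    rw [← hsum]
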